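/- Let ħ > 0, e ≠ 0 real, l ∈ ℕ, n ∈ ℕ, set λ = ħ(l + 1/2), and let E ∈ ℝ with E < 0 and e^2/√(-2E) ≥ λ. Set r∓ = (e^2 ∓ √(e^4 + 2Eλ^2))/(-2E). Then (1/ħ) ∫_{r₋}^{r₊} √(2E + 2e^2/r - λ^2/r^2) dr = π (n + 1/2) if and only if E = - e^4 / (2 ħ^2 (n + l + 1)^2). -/

import Mathlib

open Real


lemma coulomb_aux_deriv (a b x : ℝ) (ha : 0 < a) (hab : a < b) (hx : x ∈ Set.Ioo a b) :
    HasDerivAt (fun y =>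
      Real.sqrt ((y - a) * (b - y))
        + (a + b) / 2 * Real.arcsin ((2 * y - a - b) / (b - a))
        - Real.sqrt (a * b) * Real.arcsin ((a + b) / (b - a) - 2 * a * b / ((b - a) * y)))
      (Real.sqrt ((x - a) * (b - x)) / x) x := by
  obtain ⟨hxa, hxb⟩ := hx
  have hb : 0 < b := ha.trans hab
  have hx0 : 0 < x := ha.trans hxa
  have hba : 0 < b - a := sub_pos.mpr hab
  set S := Real.sqrt ((x - a) * (b - x)) with hSdef
  have hprod : 0 < (x - a) * (b - x) := mul_pos (by linarith) (by linarith)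
  have hSpos : 0 < S := Real.sqrt_pos.mpr hprod
  have hS2 : S ^ 2 = (x - a) * (b - x) := Real.sq_sqrt hprod.le
  set t := Real.sqrt (a * b) with htdef
  have htpos : 0 < t := Real.sqrt_pos.mpr (mul_pos ha hb)
  have ht2 : t ^ 2 = a * b := Real.sq_sqrt (mul_pos ha hb).le
  -- piece 1
  have h1 : HasDerivAt (fun y => Real.sqrt ((y - a) * (b - y))) ((a + b - 2 * x) / (2 * S)) x := by
    have hin : HasDerivAt (fun y => (y - a) * (b - y)) (a + b - 2 * x) x := by
      have := ((hasDerivAt_id x).sub_const a).mul ((hasDerivAt_const x b).sub (hasDerivAt_id x))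
      refine this.congr_deriv ?_
      simp; ring
    have := hin.sqrt (ne_of_gt hprod)
    convert this using 1
  -- piece 2
  have hu : HasDerivAt (fun y => (2 * y - a - b) / (b - a)) (2 / (b - a)) x := by
    have hin : HasDerivAt (fun y => 2 * y - a - b) 2 x := by
      have := (((hasDerivAt_id x).const_mul 2).sub_const a).sub_const b
      simpa using this
    simpa using hin.div_const (b - a)
  have hu1 : (2 * x - a - b) / (b - a) ≠ -1 := by
    intro h
    rw [div_eq_iff (ne_of_gt hba)] at h
    nlinarith
  have hu2 : (2 * x - a - b) / (b - a) ≠ 1 := by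
    intro h
    rw [div_eq_iff (ne_of_gt hba)] at h
    nlinarith
  have h2 : HasDerivAt (fun y => Real.arcsin ((2 * y - a - b) / (b - a)))
      (1 / Real.sqrt (1 - ((2 * x - a - b) / (b - a)) ^ 2) * (2 / (b - a))) x :=
    by have := (Real.hasDerivAt_arcsin hu1 hu2).comp x hu; exact this
  -- piece 3
  have hw : HasDerivAt (fun y => (a + b) / (b - a) - 2 * a * b / ((b - a) * y))
      (2 * a * b / ((b - a) * x ^ 2)) x := by
    have hin : HasDerivAt (fun y => (b - a) * y) (b - a) x := by
      simpa using (hasDerivAt_id x).const_mul (b - a)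
    have hinv := hin.inv (by positivity)
    have h3 := (hinv.const_mul (2 * a * b)).const_sub ((a + b) / (b - a))
    have heq : (fun y => (a + b) / (b - a) - 2 * a * b / ((b - a) * y))
        = (fun y => (a + b) / (b - a) - 2 * a * b * ((b - a) * y)⁻¹) := by
      funext y; rw [div_eq_mul_inv (2 * a * b) ((b - a) * y)]
    rw [heq]
    refine h3.congr_deriv ?_
    field_simp
  have hw1 : (a + b) / (b - a) - 2 * a * b / ((b - a) * x) ≠ -1 := by
    intro h
    rw [div_sub_div _ _ (ne_of_gt hba) (by positivity), div_eq_iff (by positivity)] at h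
    nlinarith [mul_pos hba (mul_pos hb (sub_pos.mpr hxa))]
  have hw2 : (a + b) / (b - a) - 2 * a * b / ((b - a) * x) ≠ 1 := by
    intro h
    rw [div_sub_div _ _ (ne_of_gt hba) (by positivity), div_eq_iff (by positivity)] at h
    nlinarith [mul_pos hba (mul_pos ha (sub_pos.mpr hxb))]
  have h3 : HasDerivAt (fun y => Real.arcsin ((a + b) / (b - a) - 2 * a * b / ((b - a) * y)))
      (1 / Real.sqrt (1 - ((a + b) / (b - a) - 2 * a * b / ((b - a) * x)) ^ 2)
        * (2 * a * b / ((b - a) * x ^ 2))) x :=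
    by have := (Real.hasDerivAt_arcsin hw1 hw2).comp x hw; exact this
  -- sqrt simplifications
  have e1 : Real.sqrt (1 - ((2 * x - a - b) / (b - a)) ^ 2) = 2 * S / (b - a) := by
    have hmid : 1 - ((2 * x - a - b) / (b - a)) ^ 2 = 4 * ((x - a) * (b - x)) / ((b - a) ^ 2) := by
      field_simp
      ring
    have hmid2 : (2 * S / (b - a)) ^ 2 = 4 * ((x - a) * (b - x)) / ((b - a) ^ 2) := by
      rw [div_pow, show (2 * S) ^ 2 = 4 * S ^ 2 by ring, hS2]
    rw [hmid, ← hmid2]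
    exact Real.sqrt_sq (by positivity)
  have e2 : Real.sqrt (1 - ((a + b) / (b - a) - 2 * a * b / ((b - a) * x)) ^ 2)
      = 2 * t * S / ((b - a) * x) := by
    have hmid : 1 - ((a + b) / (b - a) - 2 * a * b / ((b - a) * x)) ^ 2
        = 4 * (a * b) * ((x - a) * (b - x)) / (((b - a) * x) ^ 2) := by
      field_simp
      ring
    have hmid2 : (2 * t * S / ((b - a) * x)) ^ 2
        = 4 * (a * b) * ((x - a) * (b - x)) / (((b - a) * x) ^ 2) := by
      rw [div_pow, show (2 * t * S) ^ 2 = 4 * t ^ 2 * S ^ 2 by ring, ht2, hS2]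
    rw [hmid, ← hmid2]
    exact Real.sqrt_sq (by positivity)
  -- assemble
  have htot := (h1.add (h2.const_mul ((a + b) / 2))).sub (h3.const_mul t)
  refine htot.congr_deriv ?_
  symm
  have hSne : S ≠ 0 := hSpos.ne'
  have htne : t ≠ 0 := htpos.ne'
  have hxne : x ≠ 0 := hx0.ne'
  rw [e1, e2, one_div_div, one_div_div]
  rw [show (b - a) / (2 * S) * (2 / (b - a)) = 1 / S by field_simp
    , show (b - a) * x / (2 * t * S) * (2 * a * b / ((b - a) * x ^ 2)) = a * b / (t * S * x) by
      field_simp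
    , show t * (a * b / (t * S * x)) = a * b / (S * x) by field_simp]
  field_simp
  linear_combination 2 * hS2

lemma coulomb_integral_key (a b : ℝ) (ha : 0 < a) (hab : a ≤ b) :
    ∫ x in a..b, Real.sqrt ((x - a) * (b - x)) / x
      = Real.pi * ((a + b) / 2 - Real.sqrt (a * b)) := by
  rcases eq_or_lt_of_le hab with rfl | hlt
  · rw [intervalIntegral.integral_same, Real.sqrt_mul_self ha.le]
    ring
  · have hb : 0 < b := ha.trans hlt
    have hba : 0 < b - a := sub_pos.mpr hlt
    set F : ℝ → ℝ := fun y =>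
      Real.sqrt ((y - a) * (b - y))
        + (a + b) / 2 * Real.arcsin ((2 * y - a - b) / (b - a))
        - Real.sqrt (a * b) * Real.arcsin ((a + b) / (b - a) - 2 * a * b / ((b - a) * y))
      with hF
    have hcont : ContinuousOn F (Set.Icc a b) := by
      apply ContinuousOn.sub
      · apply ContinuousOn.add
        · exact (Real.continuous_sqrt.comp (by continuity)).continuousOn
        · exact (continuous_const.mul (Real.continuous_arcsin.comp (by continuity))).continuousOn
      · apply ContinuousOn.mul continuousOn_const
        apply Real.continuous_arcsin.comp_continuousOn
        apply ContinuousOn.sub continuousOn_const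
        apply ContinuousOn.div continuousOn_const
        · exact (continuous_const.mul continuous_id).continuousOn
        · intro y hy
          have hy0 : 0 < y := lt_of_lt_of_le ha hy.1
          positivity
    have hint : IntervalIntegrable (fun x => Real.sqrt ((x - a) * (b - x)) / x)
        MeasureTheory.volume a b := by
      apply ContinuousOn.intervalIntegrable
      rw [Set.uIcc_of_le hab]
      apply ContinuousOn.div ((Real.continuous_sqrt.comp (by continuity)).continuousOn)
        continuousOn_id
      intro y hy
      exact (lt_of_lt_of_le ha hy.1).ne'
    have hderiv : ∀ x ∈ Set.Ioo a b,
        HasDerivWithinAt F (Real.sqrt ((x - a) * (b - x)) / x) (Set.Ioi x) x :=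
      fun x hx => (coulomb_aux_deriv a b x ha hlt hx).hasDerivWithinAt
    rw [intervalIntegral.integral_eq_sub_of_hasDeriv_right_of_le hab hcont hderiv hint]
    have h1 : (2 * b - a - b) / (b - a) = 1 := by
      rw [div_eq_one_iff_eq hba.ne']; ring
    have h2 : (2 * a - a - b) / (b - a) = -1 := by
      rw [div_eq_iff hba.ne']; ring
    have h3 : (a + b) / (b - a) - 2 * a * b / ((b - a) * b) = 1 := by
      rw [div_sub_div _ _ hba.ne' (by positivity), div_eq_one_iff_eq (by positivity)]; ring
    have h4 : (a + b) / (b - a) - 2 * a * b / ((b - a) * a) = -1 := by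
      rw [div_sub_div _ _ hba.ne' (by positivity), div_eq_iff (by positivity)]; ring
    simp only [hF]
    rw [h1, h2, h3, h4, Real.arcsin_one, Real.arcsin_neg_one,
      show (b - a) * (b - b) = 0 by ring, show (a - a) * (b - a) = 0 by ring, Real.sqrt_zero]
    ring

/-- Exact-WKB (Bohr–Sommerfeld with Maslov phases) quantization for the radial Coulomb
problem `V(r) = -e²/r` with angular momentum `l`: for `hbar > 0`, `e ≠ 0`,
`λ = hbar(l + 1/2)`, `E < 0`, `e²/√(-2E) ≥ λ`, and turning points
`r∓ = (e² ∓ √(e⁴ + 2Eλ²))/(-2E)`, the condition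
`(1/hbar) ∫_{r₋}^{r₊} √(2E + 2e²/r - λ²/r²) dr = π(n + 1/2)` holds if and only if
`E = -e⁴/(2hbar²(n + l + 1)²)`. -/
theorem coulomb_quantization (hbar e : ℝ) (hhbar : 0 < hbar) (he : e ≠ 0) (l n : ℕ)
    (lam E rm rp : ℝ) (hlam : lam = hbar * (l + 1 / 2))
    (hE : E < 0) (hE' : lam ≤ e ^ 2 / Real.sqrt (-2 * E))
    (hrm : rm = (e ^ 2 - Real.sqrt (e ^ 4 + 2 * E * lam ^ 2)) / (-2 * E))
    (hrp : rp = (e ^ 2 + Real.sqrt (e ^ 4 + 2 * E * lam ^ 2)) / (-2 * E)) :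
    (1 / hbar) * ∫ r in rm..rp, Real.sqrt (2 * E + 2 * e ^ 2 / r - lam ^ 2 / r ^ 2) =
        Real.pi * (n + 1 / 2) ↔
      E = -e ^ 4 / (2 * hbar ^ 2 * (n + l + 1) ^ 2) := by
  have he2 : 0 < e ^ 2 := lt_of_le_of_ne (sq_nonneg e) (Ne.symm (pow_ne_zero 2 he))
  have hE2 : (0:ℝ) < -2 * E := by linarith
  set k := Real.sqrt (-2 * E) with hkdef
  have hk : 0 < k := Real.sqrt_pos.mpr hE2
  have hk2 : k ^ 2 = -2 * E := Real.sq_sqrt hE2.le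
  have hlam0 : 0 < lam := by rw [hlam]; positivity
  have hlamk : lam * k ≤ e ^ 2 := by
    rw [le_div_iff₀ hk] at hE'
    exact hE'
  set s := Real.sqrt (e ^ 4 + 2 * E * lam ^ 2) with hsdef
  have hD : 0 ≤ e ^ 4 + 2 * E * lam ^ 2 := by
    have h1 : lam * k * (lam * k) ≤ e ^ 2 * e ^ 2 :=
      mul_le_mul hlamk hlamk (by positivity) he2.le
    nlinarith [h1, hk2]
  have hs0 : 0 ≤ s := Real.sqrt_nonneg _
  have hs2 : s ^ 2 = e ^ 4 + 2 * E * lam ^ 2 := Real.sq_sqrt hD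
  have hslt : s < e ^ 2 := by nlinarith [mul_pos (mul_pos hlam0 hlam0) hE2]
  have hrm' : rm = (e ^ 2 - s) / k ^ 2 := by rw [hrm, hk2]
  have hrp' : rp = (e ^ 2 + s) / k ^ 2 := by rw [hrp, hk2]
  have hrm0 : 0 < rm := by
    rw [hrm']
    exact div_pos (by linarith) (by positivity)
  have hrmrp : rm ≤ rp := by
    rw [hrm', hrp']
    gcongr
    linarith
  have hsum : rm + rp = 2 * e ^ 2 / k ^ 2 := by rw [hrm', hrp']; ring
  have hprodval : rm * rp = lam ^ 2 / k ^ 2 := by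
    rw [hrm', hrp']
    field_simp
    linear_combination (-1) * hs2 + (-(lam ^ 2)) * hk2
  -- rewrite the integrand
  have hcong : Set.EqOn (fun r => Real.sqrt (2 * E + 2 * e ^ 2 / r - lam ^ 2 / r ^ 2))
      (fun r => k * (Real.sqrt ((r - rm) * (rp - r)) / r)) (Set.uIcc rm rp) := by
    intro r hr
    rw [Set.uIcc_of_le hrmrp] at hr
    have hr0 : 0 < r := lt_of_lt_of_le hrm0 hr.1
    have hP : 0 ≤ (r - rm) * (rp - r) := mul_nonneg (by linarith [hr.1]) (by linarith [hr.2])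
    have hQ : Real.sqrt ((r - rm) * (rp - r)) ^ 2 = (r - rm) * (rp - r) := Real.sq_sqrt hP
    have hfac : 2 * E * r ^ 2 + 2 * e ^ 2 * r - lam ^ 2 = k ^ 2 * ((r - rm) * (rp - r)) := by
      rw [show (r - rm) * (rp - r) = -(r ^ 2) + (rm + rp) * r - rm * rp by ring, hsum, hprodval]
      field_simp
      linear_combination (r ^ 2) * hk2
    have hpoly : 2 * E + 2 * e ^ 2 / r - lam ^ 2 / r ^ 2
        = (k * (Real.sqrt ((r - rm) * (rp - r)) / r)) ^ 2 := by
      rw [mul_pow, div_pow, hQ, ← mul_div_assoc, ← hfac]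
      field_simp
    simp only
    rw [hpoly, Real.sqrt_sq (by positivity)]
  rw [intervalIntegral.integral_congr hcong, intervalIntegral.integral_const_mul,
    coulomb_integral_key rm rp hrm0 hrmrp]
  -- compute the closed form
  have hprod : Real.sqrt (rm * rp) = lam / k := by
    rw [hprodval, show lam ^ 2 / k ^ 2 = (lam / k) ^ 2 by rw [div_pow]]
    exact Real.sqrt_sq (by positivity)
  have hval : k * (Real.pi * ((rm + rp) / 2 - Real.sqrt (rm * rp)))
      = Real.pi * (e ^ 2 / k - lam) := by
    rw [hsum, hprod]
    field_simp
  rw [hval]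
  -- final algebraic equivalence
  set N : ℝ := (n : ℝ) + (l : ℝ) + 1 with hN
  have hN0 : 0 < N := by positivity
  have hpi : (0:ℝ) < Real.pi := Real.pi_pos
  constructor
  · intro h
    rw [one_div_mul_eq_div, div_eq_iff hhbar.ne'] at h
    have h1 : Real.pi * (e ^ 2 / k - lam) = Real.pi * (hbar * ((n : ℝ) + 1 / 2)) := by
      rw [h]; ring
    have h2 : e ^ 2 / k - lam = hbar * ((n : ℝ) + 1 / 2) :=
      mul_left_cancel₀ (ne_of_gt hpi) h1
    have h3 : e ^ 2 / k = hbar * N := by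
      rw [hlam] at h2
      rw [hN]
      linarith
    have hke : e ^ 2 = hbar * N * k := by
      rw [div_eq_iff hk.ne'] at h3
      linarith [h3]
    have hEk : E = -(k ^ 2) / 2 := by linarith [hk2]
    rw [hEk, show e ^ 4 = (e ^ 2) ^ 2 by ring, hke, hN]
    field_simp
  · intro h
    have hkN : k = e ^ 2 / (hbar * N) := by
      rw [hkdef, h, hN]
      rw [show -2 * (-e ^ 4 / (2 * hbar ^ 2 * ((n:ℝ) + (l:ℝ) + 1) ^ 2))
          = (e ^ 2 / (hbar * ((n:ℝ) + (l:ℝ) + 1))) ^ 2 by field_simp]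
      exact Real.sqrt_sq (by positivity)
    rw [hkN, hlam, hN]
    field_simp
    ring
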